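/- Let U ⊆ ℝ³ be open, ν : U → ℝ continuously differentiable with |∇ν(x)| = 1 for all x ∈ U, k a natural number, z ∈ ℂ with z ≠ 0, and g, f_ν : U → ℂ continuously differentiable. Define p = e^{−zν}·( P₃(zν)·g + P₁(zν)·f_ν ). Then on U one has ∇p = z·e^{−zν}·[ ( (zν)^k·f_ν + (P₃′ − P₃)(zν)·g )·∇ν + z^{−1}·( P₁(zν)·∇f_ν + P₃(zν)·∇g ) ]. -/

import Mathlib

open Polynomial

/-- Componentwise complexification of a real vector in `ℝ³`. -/
noncomputable def cV (v : EuclideanSpace ℝ (Fin 3)) : EuclideanSpace ℂ (Fin 3) :=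
  WithLp.toLp 2 (fun i => (v i : ℂ))

/-- Gradient (vector of partial derivatives) of a complex-valued function on `ℝ³`. -/
noncomputable def gradC (f : EuclideanSpace ℝ (Fin 3) → ℂ)
    (x : EuclideanSpace ℝ (Fin 3)) : EuclideanSpace ℂ (Fin 3) :=
  WithLp.toLp 2 (fun i => fderiv ℝ f x (EuclideanSpace.single i 1))

/-- The polynomial `P₁(X) = -k! · ∑_{j=0}^{k} X^j / j!` (over `ℂ`). -/
noncomputable def P₁ (k : ℕ) : Polynomial ℂ :=
  -(C (k.factorial : ℂ)) * ∑ j ∈ Finset.range (k + 1), C ((j.factorial : ℂ)⁻¹) * X ^ j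

/-- The polynomial `P₃(X) = -k! · ∑_{j=0}^{k-1} (k-j+1) X^j / j!` (over `ℂ`, zero if `k = 0`). -/
noncomputable def P₃ (k : ℕ) : Polynomial ℂ :=
  -(C (k.factorial : ℂ)) *
    ∑ j ∈ Finset.range k, C (((k : ℂ) - j + 1) * (j.factorial : ℂ)⁻¹) * X ^ j

lemma gradient_apply_single (f : EuclideanSpace ℝ (Fin 3) → ℝ)
    (x : EuclideanSpace ℝ (Fin 3)) (i : Fin 3) :
    (gradient f x) i = fderiv ℝ f x (EuclideanSpace.single i 1) := by
  have h : @inner ℝ _ _ (gradient f x) (EuclideanSpace.single i (1:ℝ))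
      = fderiv ℝ f x (EuclideanSpace.single i 1) := by
    simp [gradient]
  rw [← h]
  rw [EuclideanSpace.inner_single_right]
  simp

lemma P1_deriv_eval (k : ℕ) (u : ℂ) :
    (derivative (P₁ k)).eval u = (P₁ k).eval u + u ^ k := by
  have e1 : (P₁ k).eval u
      = -(k.factorial : ℂ) * ∑ j ∈ Finset.range (k + 1), (j.factorial : ℂ)⁻¹ * u ^ j := by
    simp [P₁, eval_finset_sum]
  have e2 : (derivative (P₁ k)).eval u
      = -(k.factorial : ℂ) *
          ∑ j ∈ Finset.range (k + 1), (j.factorial : ℂ)⁻¹ * ((j : ℂ) * u ^ (j - 1)) := by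
    simp only [P₁, derivative_mul, derivative_neg, derivative_C, neg_zero, zero_mul, neg_mul,
      eval_neg, eval_mul, eval_C, derivative_sum, derivative_C_mul, derivative_X_pow,
      eval_finset_sum, eval_pow, eval_X, zero_add]
  have e3 : ∑ j ∈ Finset.range (k + 1), (j.factorial : ℂ)⁻¹ * ((j : ℂ) * u ^ (j - 1))
      = ∑ j ∈ Finset.range k, (j.factorial : ℂ)⁻¹ * u ^ j := by
    rw [Finset.sum_range_succ']
    simp only [Nat.cast_zero, zero_mul, mul_zero, add_zero, Nat.factorial_zero]
    apply Finset.sum_congr rfl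
    intro j _
    have hj : ((j.factorial : ℂ)) ≠ 0 := Nat.cast_ne_zero.2 j.factorial_ne_zero
    have : ((j + 1).factorial : ℂ) = ((j : ℂ) + 1) * (j.factorial : ℂ) := by
      rw [Nat.factorial_succ]; push_cast; ring
    rw [this]
    simp only [Nat.add_sub_cancel, Nat.cast_add, Nat.cast_one]
    have hj1 : ((j : ℂ) + 1) ≠ 0 := Nat.cast_add_one_ne_zero j
    field_simp
  have hk : (k.factorial : ℂ) ≠ 0 := Nat.cast_ne_zero.2 k.factorial_ne_zero
  rw [e1, e2, e3, Finset.sum_range_succ]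
  field_simp
  ring

/-- let `ν` be `C¹` on the open `U` with `|∇ν| = 1`, `k ∈ ℕ`, `z ≠ 0`,
`g, f_ν : U → ℂ` of class `C¹`, and `p = e^{−zν}·(P₃(zν)·g + P₁(zν)·f_ν)`. Then on `U`:
`∇p = z·e^{−zν}·[((zν)^k·f_ν + (P₃′ − P₃)(zν)·g)·∇ν + z^{−1}·(P₁(zν)·∇f_ν + P₃(zν)·∇g)]`. -/
theorem statement11
    (U : Set (EuclideanSpace ℝ (Fin 3))) (hU : IsOpen U)
    (ν : EuclideanSpace ℝ (Fin 3) → ℝ)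
    (hν : ContDiffOn ℝ 1 ν U)
    (hgrad : ∀ x ∈ U, ‖gradient ν x‖ = 1)
    (k : ℕ) (z : ℂ) (hz : z ≠ 0)
    (g fν : EuclideanSpace ℝ (Fin 3) → ℂ)
    (hg : ContDiffOn ℝ 1 g U) (hfν : ContDiffOn ℝ 1 fν U)
    (p : EuclideanSpace ℝ (Fin 3) → ℂ)
    (hp : ∀ y, p y = Complex.exp (-z * (ν y : ℂ)) *
        ((P₃ k).eval (z * (ν y : ℂ)) * g y + (P₁ k).eval (z * (ν y : ℂ)) * fν y))
    (x : EuclideanSpace ℝ (Fin 3)) (hx : x ∈ U) :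
    gradC p x
      = (z * Complex.exp (-z * (ν x : ℂ))) •
          (((z * (ν x : ℂ)) ^ k * fν x
              + (derivative (P₃ k) - P₃ k).eval (z * (ν x : ℂ)) * g x) • cV (gradient ν x)
            + z⁻¹ • ((P₁ k).eval (z * (ν x : ℂ)) • gradC fν x
                + (P₃ k).eval (z * (ν x : ℂ)) • gradC g x)) := by
  have hxn : U ∈ nhds x := hU.mem_nhds hx
  have hνd : DifferentiableAt ℝ ν x := (hν.contDiffAt hxn).differentiableAt one_ne_zero
  have hgd : DifferentiableAt ℝ g x := (hg.contDiffAt hxn).differentiableAt one_ne_zero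
  have hfd : DifferentiableAt ℝ fν x := (hfν.contDiffAt hxn).differentiableAt one_ne_zero
  set u : ℂ := z * (ν x : ℂ) with hu
  set e := fderiv ℝ ν x with he
  set E := Complex.ofRealCLM.comp e with hE
  have hW : HasFDerivAt (fun y => ((ν y : ℝ) : ℂ)) E x :=
    Complex.ofRealCLM.hasFDerivAt.comp x hνd.hasFDerivAt
  have hw : HasFDerivAt (fun y => z * (ν y : ℂ)) (z • E) x := hW.const_mul z
  have hnegw : HasFDerivAt (fun y => -z * (ν y : ℂ)) ((-z) • E) x := hW.const_mul (-z)
  have hexp : HasFDerivAt (fun y => Complex.exp (-z * (ν y : ℂ)))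
      (Complex.exp (-z * (ν x : ℂ)) • ((-z) • E)) x := hnegw.cexp
  have hP3 : HasFDerivAt (fun y => (P₃ k).eval (z * (ν y : ℂ)))
      (((derivative (P₃ k)).eval u) • (z • E)) x :=
    HasDerivAt.comp_hasFDerivAt (h₂ := fun w => (P₃ k).eval w) x (Polynomial.hasDerivAt (P₃ k) u) hw
  have hP1 : HasFDerivAt (fun y => (P₁ k).eval (z * (ν y : ℂ)))
      (((derivative (P₁ k)).eval u) • (z • E)) x :=
    HasDerivAt.comp_hasFDerivAt (h₂ := fun w => (P₁ k).eval w) x (Polynomial.hasDerivAt (P₁ k) u) hw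
  have hS := (hP3.mul hgd.hasFDerivAt).add (hP1.mul hfd.hasFDerivAt)
  have hp' := hexp.mul hS
  have hpe : p = fun y => Complex.exp (-z * (ν y : ℂ)) *
      ((P₃ k).eval (z * (ν y : ℂ)) * g y + (P₁ k).eval (z * (ν y : ℂ)) * fν y) := funext hp
  have hfp := hpe ▸ (show HasFDerivAt (fun y => Complex.exp (-z * (ν y : ℂ)) *
      ((P₃ k).eval (z * (ν y : ℂ)) * g y + (P₁ k).eval (z * (ν y : ℂ)) * fν y)) _ x from hp')
  ext i
  have hgi : (gradient ν x) i = e (EuclideanSpace.single i 1) := gradient_apply_single ν x i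
  have h1 := P1_deriv_eval k u
  have hEe : E (EuclideanSpace.single i 1) = ((e (EuclideanSpace.single i 1) : ℝ) : ℂ) := rfl
  simp only [gradC, hfp.fderiv, ContinuousLinearMap.add_apply, ContinuousLinearMap.smul_apply,
    ContinuousLinearMap.coe_comp', Function.comp_apply, Complex.ofRealCLM_apply,
    PiLp.smul_apply, PiLp.add_apply, smul_eq_mul, cV, hgi, h1, hEe, Pi.add_apply, Pi.mul_apply,
    eval_sub]
  field_simp
  ring
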